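/- Fix δ > 0 and B ∈ ℝ. For any prime p and positive integer m, the sum over primes q and positive integers n with q^n < p^m of q^{-n}/(n (m log p - n log q)) is O(m log p), with implied constant independent of p and m. Consequently, the quadruple series ∑_{p,m} ∑_{q^n < p^m} p^{-m(1+δ)} q^{-n} (m log p)^B (log p) / (n (m log p - n log q)) converges. -/

import Mathlib

open Real



lemma ppow_inj : Function.Injective (fun y : Nat.Primes × ℕ => (y.1 : ℕ) ^ (y.2 + 1)) := by
  rintro ⟨q, n⟩ ⟨r, k⟩ h
  simp only at h
  have hqr : (q : ℕ) = r := by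
    have h1 : (q : ℕ) ∣ (r : ℕ) ^ (k + 1) := h ▸ dvd_pow_self _ (Nat.succ_ne_zero n)
    exact (Nat.prime_dvd_prime_iff_eq q.prop r.prop).mp (q.prop.dvd_of_dvd_pow h1)
  have hq : q = r := Subtype.ext hqr
  subst hq
  have : n + 1 = k + 1 := Nat.pow_right_injective q.prop.two_le h
  simp [Nat.succ_injective this]

lemma setFinite (N : ℕ) : {y : Nat.Primes × ℕ | (y.1 : ℕ) ^ (y.2 + 1) < N}.Finite := by
  apply Set.Finite.of_finite_image (f := fun y : Nat.Primes × ℕ => (y.1 : ℕ) ^ (y.2 + 1))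
  · exact (Set.finite_Iio N).subset (by rintro _ ⟨y, hy, rfl⟩; exact hy)
  · exact ppow_inj.injOn

lemma sum_Ico_inv_le (N : ℕ) : ∑ l ∈ Finset.Ico 1 N, (1 : ℝ) / l ≤ 1 + Real.log N := by
  rcases N with _ | M
  · simp
  rw [Finset.Ico_add_one_right_eq_Icc]
  have h2 : ((harmonic M : ℚ) : ℝ) = ∑ d ∈ Finset.Icc 1 M, (1 : ℝ) / d := by
    rw [harmonic_eq_sum_Icc]; push_cast; simp [one_div]
  rw [← h2]
  refine (harmonic_le_one_add_log M).trans ?_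
  have : Real.log M ≤ Real.log (M + 1) := by
    rcases Nat.eq_zero_or_pos M with h | h
    · simp [h]
    · exact Real.log_le_log (by positivity) (by push_cast; linarith)
  push_cast
  linarith


lemma log_sub_log_ge {l N : ℕ} (hl : 0 < l) (hlN : l < N) :
    ((N : ℝ) - l) / N ≤ Real.log N - Real.log l := by
  have hN : (0:ℝ) < N := by exact_mod_cast hl.trans hlN
  have hl' : (0:ℝ) < l := by exact_mod_cast hl
  have := Real.log_le_sub_one_of_pos (x := (l : ℝ) / N) (div_pos hl' hN)
  rw [Real.log_div (ne_of_gt hl') (ne_of_gt hN)] at this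
  have h2 : (l:ℝ)/N - 1 = -(((N:ℝ) - l)/N) := by field_simp; ring
  linarith [this, h2 ▸ this]

lemma part1 (p : Nat.Primes) (m : ℕ) :
    (∑' y : {y : Nat.Primes × ℕ // ((y.1 : ℕ)) ^ (y.2 + 1) < ((p : ℕ)) ^ (m + 1)},
      ((y : Nat.Primes × ℕ).1 : ℝ) ^ (-((y : Nat.Primes × ℕ).2 + 1 : ℤ)) /
        (((y : Nat.Primes × ℕ).2 + 1 : ℝ) *
          ((m + 1 : ℝ) * Real.log (p : ℝ) -
            ((y : Nat.Primes × ℕ).2 + 1 : ℝ) * Real.log ((y : Nat.Primes × ℕ).1 : ℝ))))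
      ≤ 6 * ((m + 1 : ℝ) * Real.log (p : ℝ)) := by
  set N : ℕ := (p : ℕ) ^ (m + 1) with hNdef
  have hp2 : 2 ≤ (p : ℕ) := p.prop.two_le
  have hN2 : 2 ≤ N := le_trans hp2 (Nat.le_self_pow (Nat.succ_ne_zero m) _)
  have hNR : (0:ℝ) < N := by positivity
  have hlogN : Real.log N = (m + 1 : ℝ) * Real.log (p : ℝ) := by
    rw [hNdef]; push_cast [Real.log_pow]; ring
  have hlogN2 : Real.log 2 ≤ Real.log N :=
    Real.log_le_log (by norm_num) (by exact_mod_cast hN2)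
  have hlog2 : (0.6931471803 : ℝ) < Real.log 2 := Real.log_two_gt_d9
  -- the dominating function on ℕ
  set g : ℕ → ℝ := fun l => if 2 ≤ l ∧ l < N then 1 / (l : ℝ) + 1 / ((N : ℝ) - l) else 0
    with hgdef
  have hg0 : ∀ l, 0 ≤ g l := by
    intro l
    simp only [hgdef]
    split_ifs with h
    · have : (l : ℝ) < N := by exact_mod_cast h.2
      have : (0:ℝ) < (N:ℝ) - l := by linarith
      positivity
    · exact le_rfl
  -- injection into ℕ
  have he : Function.Injective
      (fun y : {y : Nat.Primes × ℕ // ((y.1 : ℕ)) ^ (y.2 + 1) < N} =>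
        ((y : Nat.Primes × ℕ).1 : ℕ) ^ ((y : Nat.Primes × ℕ).2 + 1)) := by
    intro a b hab
    exact Subtype.ext (ppow_inj hab)
  have hfin : Finite {y : Nat.Primes × ℕ // ((y.1 : ℕ)) ^ (y.2 + 1) < N} :=
    (setFinite N).to_subtype
  have hsumf : Summable
      (fun y : {y : Nat.Primes × ℕ // ((y.1 : ℕ)) ^ (y.2 + 1) < N} =>
        ((y : Nat.Primes × ℕ).1 : ℝ) ^ (-((y : Nat.Primes × ℕ).2 + 1 : ℤ)) /
          (((y : Nat.Primes × ℕ).2 + 1 : ℝ) *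
            ((m + 1 : ℝ) * Real.log (p : ℝ) -
              ((y : Nat.Primes × ℕ).2 + 1 : ℝ) * Real.log ((y : Nat.Primes × ℕ).1 : ℝ)))) :=
    summable_of_finite_support (Set.toFinite _)
  have hsumg : Summable g := by
    apply summable_of_ne_finset_zero (s := Finset.range N)
    intro l hl
    simp only [hgdef]
    rw [if_neg]
    intro h
    exact hl (Finset.mem_range.mpr h.2)
  have hmain : ∀ y : {y : Nat.Primes × ℕ // ((y.1 : ℕ)) ^ (y.2 + 1) < N},
      ((y : Nat.Primes × ℕ).1 : ℝ) ^ (-((y : Nat.Primes × ℕ).2 + 1 : ℤ)) /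
          (((y : Nat.Primes × ℕ).2 + 1 : ℝ) *
            ((m + 1 : ℝ) * Real.log (p : ℝ) -
              ((y : Nat.Primes × ℕ).2 + 1 : ℝ) * Real.log ((y : Nat.Primes × ℕ).1 : ℝ)))
        ≤ g (((y : Nat.Primes × ℕ).1 : ℕ) ^ ((y : Nat.Primes × ℕ).2 + 1)) := by
    rintro ⟨⟨q, n⟩, hy⟩
    simp only at hy ⊢
    set l : ℕ := (q : ℕ) ^ (n + 1) with hldef
    have hl2 : 2 ≤ l := le_trans q.prop.two_le (Nat.le_self_pow (Nat.succ_ne_zero n) _)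
    have hlN : l < N := hy
    have hlR : (0:ℝ) < l := by positivity
    have haN : (l : ℝ) < N := by exact_mod_cast hlN
    have hNl : (0:ℝ) < (N:ℝ) - l := by linarith
    have hcast : ((l:ℕ):ℝ) = ((q:ℕ):ℝ) ^ (n + 1) := by push_cast [hldef]; ring
    have hzpow : ((q:ℕ):ℝ) ^ (-((n : ℤ) + 1)) = ((l:ℕ):ℝ)⁻¹ := by
      rw [show (-((n:ℤ) + 1)) = -((n + 1 : ℕ) : ℤ) by push_cast; ring, zpow_neg, zpow_natCast,
        hcast]
    have hlog : ((n:ℝ) + 1) * Real.log ((q:ℕ):ℝ) = Real.log l := by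
      rw [hcast, Real.log_pow]; push_cast; ring
    have hden : ((m:ℝ) + 1) * Real.log ((p:ℕ):ℝ) - ((n:ℝ) + 1) * Real.log ((q:ℕ):ℝ)
        = Real.log N - Real.log l := by rw [← hlogN, hlog]
    have hgap : ((N:ℝ) - l)/N ≤ Real.log N - Real.log l := log_sub_log_ge (by omega) hlN
    have hgap0 : (0:ℝ) < ((N:ℝ) - l)/N := by positivity
    have hD : ((N:ℝ) - l)/N ≤ ((n:ℝ) + 1) * (Real.log N - Real.log l) :=
      hgap.trans (le_mul_of_one_le_left (by linarith) (le_add_of_nonneg_left (Nat.cast_nonneg n)))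
    have hDpos : (0:ℝ) < ((n:ℝ) + 1) * (Real.log N - Real.log l) := lt_of_lt_of_le hgap0 hD
    have hD' : (N:ℝ) - l ≤ ((n:ℝ) + 1) * (Real.log N - Real.log l) * N := by
      rw [div_le_iff₀ hNR] at hD; linarith
    have hgval : g l = 1/(l:ℝ) + 1/((N:ℝ) - l) := by
      simp only [hgdef]; rw [if_pos ⟨hl2, hlN⟩]
    rw [hden, hzpow, hgval]
    have h1 : 1/(l:ℝ) + 1/((N:ℝ) - l) = (N:ℝ)/((l:ℝ) * ((N:ℝ) - l)) := by
      field_simp; ring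
    rw [h1, div_le_div_iff₀ hDpos (by positivity)]
    have h2 : ((l:ℕ):ℝ)⁻¹ * ((l:ℝ) * ((N:ℝ) - l)) = (N:ℝ) - l := by
      field_simp
    rw [h2]
    nlinarith [hD']
  refine le_trans (Summable.tsum_le_tsum_of_inj _ he (fun c _ => hg0 c) hmain hsumf hsumg) ?_
  calc ∑' l, g l
      = ∑ l ∈ Finset.range N, g l := tsum_eq_sum (fun l hl => by
        simp only [hgdef]
        rw [if_neg]
        intro h
        exact hl (Finset.mem_range.mpr h.2))
    _ = ∑ l ∈ Finset.Ico 2 N, g l := by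
        refine (Finset.sum_subset (fun x hx => Finset.mem_range.mpr (Finset.mem_Ico.mp hx).2)
          (fun x _ hx => ?_)).symm
        simp only [hgdef]
        rw [if_neg]
        intro h
        exact hx (Finset.mem_Ico.mpr h)
    _ = (∑ l ∈ Finset.Ico 2 N, 1/(l:ℝ)) + ∑ l ∈ Finset.Ico 2 N, 1/((N:ℝ) - l) := by
        rw [← Finset.sum_add_distrib]
        refine Finset.sum_congr rfl (fun l hl => ?_)
        simp only [hgdef]
        rw [if_pos (Finset.mem_Ico.mp hl)]
    _ ≤ (1 + Real.log N) + (1 + Real.log N) := by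
        gcongr ?_ + ?_
        · refine le_trans (Finset.sum_le_sum_of_subset_of_nonneg
            (show Finset.Ico 2 N ⊆ Finset.Ico 1 N from
              Finset.Ico_subset_Ico (by norm_num) le_rfl) (fun l hl _ => by positivity)) ?_
          exact sum_Ico_inv_le N
        · have hrw : ∑ l ∈ Finset.Ico 2 N, 1/((N:ℝ) - l)
              = ∑ j ∈ Finset.Ico 1 (N - 1), 1/(j:ℝ) := by
            refine Finset.sum_nbij' (fun l => N - l) (fun j => N - j) ?_ ?_ ?_ ?_ ?_
            · intro a ha; simp only [Finset.mem_Ico] at ha ⊢; omega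
            · intro a ha; simp only [Finset.mem_Ico] at ha ⊢; omega
            · intro a ha; simp only [Finset.mem_Ico] at ha; show N - (N - a) = a; omega
            · intro a ha; simp only [Finset.mem_Ico] at ha; show N - (N - a) = a; omega
            · intro a ha
              simp only [Finset.mem_Ico] at ha
              have : ((N - a : ℕ) : ℝ) = (N:ℝ) - a := by
                push_cast [Nat.cast_sub (le_of_lt ha.2)]; ring
              rw [this]
          rw [hrw]
          refine le_trans (Finset.sum_le_sum_of_subset_of_nonneg
            (show Finset.Ico 1 (N-1) ⊆ Finset.Ico 1 N from
              Finset.Ico_subset_Ico le_rfl (by omega)) (fun l hl _ => by positivity)) ?_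
          exact sum_Ico_inv_le N
    _ ≤ 6 * ((m + 1 : ℝ) * Real.log (p : ℝ)) := by
        rw [← hlogN]; nlinarith [hlog2, hlogN2]


lemma growth_aux (c ε : ℝ) (hε : 0 < ε) :
    ∃ K : ℝ, 0 < K ∧ ∀ x : ℝ, Real.log 2 ≤ x → x ^ c ≤ K * Real.exp (ε * x) := by
  have hlog2 : (0:ℝ) < Real.log 2 := Real.log_pos (by norm_num)
  rcases le_or_gt c 0 with hc | hc
  · refine ⟨(Real.log 2) ^ c, Real.rpow_pos_of_pos hlog2 c, fun x hx => ?_⟩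
    have h1 : x ^ c ≤ (Real.log 2) ^ c := Real.rpow_le_rpow_of_nonpos hlog2 hx hc
    have h2 : (1:ℝ) ≤ Real.exp (ε * x) := by
      rw [Real.one_le_exp_iff]
      exact mul_nonneg hε.le (le_trans hlog2.le hx)
    nlinarith [Real.rpow_pos_of_pos hlog2 c]
  · refine ⟨(c / ε) ^ c, Real.rpow_pos_of_pos (by positivity) c, fun x hx => ?_⟩
    set t := ε * x / c with ht
    have hx0 : 0 < x := lt_of_lt_of_le hlog2 hx
    have ht0 : 0 < t := by positivity
    have h1 : x = c / ε * t := by field_simp [ht]; rw [ht]; field_simp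
    have h2 : t ≤ Real.exp t := by linarith [Real.add_one_le_exp t]
    have h3 : x ≤ c / ε * Real.exp t := by
      rw [h1]; exact mul_le_mul_of_nonneg_left h2 (by positivity)
    have h4 : x ^ c ≤ (c / ε * Real.exp t) ^ c :=
      Real.rpow_le_rpow (le_of_lt hx0) h3 (le_of_lt hc)
    have h5 : (c / ε * Real.exp t) ^ c = (c/ε)^c * Real.exp (ε * x) := by
      rw [Real.mul_rpow (by positivity) (by positivity),
        Real.rpow_def_of_pos (Real.exp_pos t), Real.log_exp]
      congr 2
      field_simp [ht]
      rw [ht]; field_simp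
    rw [h5] at h4
    exact h4


noncomputable def inn (a b : Nat.Primes × ℕ) : ℝ :=
  (b.1 : ℝ) ^ (-(b.2 + 1 : ℤ)) /
    ((b.2 + 1 : ℝ) * ((a.2 + 1 : ℝ) * Real.log (a.1 : ℝ) - (b.2 + 1 : ℝ) * Real.log (b.1 : ℝ)))

noncomputable def Aa (δ B : ℝ) (a : Nat.Primes × ℕ) : ℝ :=
  (a.1 : ℝ) ^ (-((a.2 + 1 : ℝ) * (1 + δ))) * ((a.2 + 1 : ℝ) * Real.log (a.1 : ℝ)) ^ B *
    Real.log (a.1 : ℝ)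

noncomputable def Phi (δ B : ℝ) (x : (Nat.Primes × ℕ) × (Nat.Primes × ℕ)) : ℝ :=
  (x.1.1 : ℝ) ^ (-((x.1.2 + 1 : ℝ) * (1 + δ))) * (x.2.1 : ℝ) ^ (-(x.2.2 + 1 : ℤ)) *
    ((x.1.2 + 1 : ℝ) * Real.log (x.1.1 : ℝ)) ^ B * Real.log (x.1.1 : ℝ) /
    ((x.2.2 + 1 : ℝ) *
      ((x.1.2 + 1 : ℝ) * Real.log (x.1.1 : ℝ) - (x.2.2 + 1 : ℝ) * Real.log (x.2.1 : ℝ)))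

def Scond : Set ((Nat.Primes × ℕ) × (Nat.Primes × ℕ)) :=
  {x | ((x.2.1 : ℕ)) ^ (x.2.2 + 1) < ((x.1.1 : ℕ)) ^ (x.1.2 + 1)}

lemma log_prime_pos (q : Nat.Primes) : 0 < Real.log (q : ℝ) := by
  have : (1:ℝ) < ((q : ℕ) : ℝ) := by exact_mod_cast q.prop.one_lt
  exact Real.log_pos this

lemma gap_pos {a b : Nat.Primes × ℕ} (h : ((b.1 : ℕ)) ^ (b.2 + 1) < ((a.1 : ℕ)) ^ (a.2 + 1)) :
    0 < (a.2 + 1 : ℝ) * Real.log (a.1 : ℝ) - (b.2 + 1 : ℝ) * Real.log (b.1 : ℝ) := by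
  set l : ℕ := (b.1 : ℕ) ^ (b.2 + 1) with hl
  set N : ℕ := (a.1 : ℕ) ^ (a.2 + 1) with hN
  have hl1 : 0 < l := pow_pos b.1.prop.pos _
  have hlog1 : (a.2 + 1 : ℝ) * Real.log (a.1 : ℝ) = Real.log N := by
    rw [hN]; push_cast [Real.log_pow]; ring
  have hlog2 : (b.2 + 1 : ℝ) * Real.log (b.1 : ℝ) = Real.log l := by
    rw [hl]; push_cast [Real.log_pow]; ring
  rw [hlog1, hlog2]
  have hNR : (0:ℝ) < N := by exact_mod_cast pow_pos a.1.prop.pos (a.2+1)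
  have hlR : (l : ℝ) < N := by exact_mod_cast h
  have := log_sub_log_ge hl1 h
  have h2 : (0:ℝ) < ((N:ℝ) - l) / N := by
    apply div_pos _ hNR
    linarith
  linarith

lemma inn_nonneg {a b : Nat.Primes × ℕ} (h : ((b.1 : ℕ)) ^ (b.2 + 1) < ((a.1 : ℕ)) ^ (a.2 + 1)) :
    0 ≤ inn a b := by
  unfold inn
  apply div_nonneg
  · exact zpow_nonneg (by positivity) _
  · have := gap_pos h
    positivity

lemma Aa_nonneg (δ B : ℝ) (a : Nat.Primes × ℕ) : 0 ≤ Aa δ B a := by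
  unfold Aa
  have h1 := log_prime_pos a.1
  have : (0:ℝ) < ((a.1 : ℕ) : ℝ) := by
    have := a.1.prop.two_le
    exact_mod_cast lt_of_lt_of_le (by norm_num) this
  positivity

lemma Phi_split (δ B : ℝ) (x : (Nat.Primes × ℕ) × (Nat.Primes × ℕ)) :
    Phi δ B x = Aa δ B x.1 * inn x.1 x.2 := by
  unfold Phi Aa inn
  ring

theorem main (δ B : ℝ) (hδ : 0 < δ) :
    Summable (fun x : {x : (Nat.Primes × ℕ) × (Nat.Primes × ℕ) //
        ((x.2.1 : ℕ)) ^ (x.2.2 + 1) < ((x.1.1 : ℕ)) ^ (x.1.2 + 1)} => Phi δ B x) := by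
  have hmem : ∀ x : (Nat.Primes × ℕ) × (Nat.Primes × ℕ),
      x ∈ Scond ↔ ((x.2.1 : ℕ)) ^ (x.2.2 + 1) < ((x.1.1 : ℕ)) ^ (x.1.2 + 1) := fun x => Iff.rfl
  -- reduce to indicator
  have hred : Summable (Scond.indicator (Phi δ B)) →
      Summable (fun x : {x : (Nat.Primes × ℕ) × (Nat.Primes × ℕ) //
        ((x.2.1 : ℕ)) ^ (x.2.2 + 1) < ((x.1.1 : ℕ)) ^ (x.1.2 + 1)} => Phi δ B x) := by
    intro h
    exact (summable_subtype_iff_indicator (s := Scond) (f := Phi δ B)).mpr h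
  apply hred
  -- nonnegativity
  have hΦ0 : ∀ x ∈ Scond, 0 ≤ Phi δ B x := by
    intro x hx
    rw [Phi_split]
    exact mul_nonneg (Aa_nonneg δ B x.1) (inn_nonneg hx)
  have hG0 : ∀ x, 0 ≤ Scond.indicator (Phi δ B) x :=
    fun x => Set.indicator_nonneg (fun y hy => hΦ0 y hy) x
  rw [show Scond.indicator (Phi δ B) = fun x : (Nat.Primes × ℕ) × (Nat.Primes × ℕ) =>
      Scond.indicator (Phi δ B) (x.1, x.2) from by funext x; rfl] at *
  refine (summable_prod_of_nonneg hG0).mpr ⟨fun a => ?_, ?_⟩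
  · -- slice summability
    apply summable_of_ne_finset_zero (s := (setFinite ((a.1 : ℕ) ^ (a.2 + 1))).toFinset)
    intro b hb
    apply Set.indicator_of_notMem
    intro hmemS
    exact hb ((setFinite _).mem_toFinset.mpr hmemS)
  · -- sum over slices
    obtain ⟨K, hK, hKle⟩ := growth_aux (B + 2) (δ / 2) (by linarith)
    set C : ℝ := 6 * K with hC
    -- comparison function
    have hcmp : Summable (fun a : Nat.Primes × ℕ =>
        C * ((((a.1 : ℕ) ^ (a.2 + 1) : ℕ) : ℝ) ^ (-(1 + δ/2)))) := by
      have h1 : Summable (fun n : ℕ => (n : ℝ) ^ (-(1 + δ/2))) :=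
        Real.summable_nat_rpow.mpr (by linarith)
      exact (h1.comp_injective ppow_inj).mul_left C
    refine Summable.of_nonneg_of_le (fun a => tsum_nonneg (fun b => hG0 (a, b))) (fun a => ?_) hcmp
    -- now bound the inner tsum for fixed a
    set p := a.1 with hp
    set m := a.2 with hm
    set N : ℕ := (p : ℕ) ^ (m + 1) with hN
    have hp1 : (0:ℝ) < ((p : ℕ) : ℝ) := by
      have := p.prop.two_le
      exact_mod_cast lt_of_lt_of_le (by norm_num) this
    have hlogp := log_prime_pos p
    set x : ℝ := (m + 1 : ℝ) * Real.log (p : ℝ) with hx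
    have hx0 : 0 < x := by
      rw [hx]; positivity
    have hxlog : x = Real.log (N : ℝ) := by
      rw [hx, hN]; push_cast [Real.log_pow]; ring
    have hN2 : 2 ≤ N := le_trans p.prop.two_le (Nat.le_self_pow (Nat.succ_ne_zero m) _)
    have hxge : Real.log 2 ≤ x := by
      rw [hxlog]
      exact Real.log_le_log (by norm_num) (by exact_mod_cast hN2)
    -- step 1: rewrite tsum of slice
    have step1 : ∑' b, Scond.indicator (Phi δ B) (a, b)
        = Aa δ B a * ∑' b : {y : Nat.Primes × ℕ // ((y.1 : ℕ)) ^ (y.2 + 1) < N}, inn a b := by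
      have e1 : ∀ b : Nat.Primes × ℕ, Scond.indicator (Phi δ B) (a, b) =
          Set.indicator {y : Nat.Primes × ℕ | ((y.1 : ℕ)) ^ (y.2 + 1) < N}
            (fun b => Aa δ B a * inn a b) b := by
        intro b
        by_cases hb : ((b.1 : ℕ)) ^ (b.2 + 1) < N
        · rw [Set.indicator_of_mem (show (a, b) ∈ Scond from hb),
            Set.indicator_of_mem
              (show b ∈ {y : Nat.Primes × ℕ | ((y.1 : ℕ)) ^ (y.2 + 1) < N} from hb)]
          exact Phi_split δ B (a, b)
        · rw [Set.indicator_of_notMem (show (a, b) ∉ Scond from hb),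
            Set.indicator_of_notMem
              (show b ∉ {y : Nat.Primes × ℕ | ((y.1 : ℕ)) ^ (y.2 + 1) < N} from hb)]
      calc ∑' b, Scond.indicator (Phi δ B) (a, b)
          = ∑' b, Set.indicator {y : Nat.Primes × ℕ | ((y.1 : ℕ)) ^ (y.2 + 1) < N}
              (fun b => Aa δ B a * inn a b) b := tsum_congr e1
        _ = ∑' b : {y : Nat.Primes × ℕ // ((y.1 : ℕ)) ^ (y.2 + 1) < N}, Aa δ B a * inn a b :=
            (tsum_subtype _ _).symm
        _ = Aa δ B a * ∑' b : {y : Nat.Primes × ℕ // ((y.1 : ℕ)) ^ (y.2 + 1) < N}, inn a b :=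
            tsum_mul_left
    rw [step1]
    -- step 2: apply part1
    have step2 : (∑' b : {y : Nat.Primes × ℕ // ((y.1 : ℕ)) ^ (y.2 + 1) < N}, inn a b)
        ≤ 6 * x := part1 p m
    have step3 : Aa δ B a * ∑' b : {y : Nat.Primes × ℕ // ((y.1 : ℕ)) ^ (y.2 + 1) < N}, inn a b
        ≤ Aa δ B a * (6 * x) := by
      apply mul_le_mul_of_nonneg_left step2 (Aa_nonneg δ B a)
    refine le_trans step3 ?_
    -- step 4: bound Aa * 6x
    have hrp : ((p : ℕ) : ℝ) ^ (-((m + 1 : ℝ) * (1 + δ))) = Real.exp (-(1 + δ) * x) := by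
      rw [Real.rpow_def_of_pos hp1, hx]
      congr 1
      ring
    have hAa : Aa δ B a = Real.exp (-(1 + δ) * x) * x ^ B * Real.log (p : ℝ) := by
      unfold Aa
      rw [← hp, ← hm, ← hx, hrp]
    have hlogpx : Real.log (p : ℝ) ≤ x := by
      rw [hx]
      nlinarith [Nat.cast_nonneg (α := ℝ) m]
    have hxB2 : x ^ B * Real.log (p : ℝ) * (6 * x) ≤ 6 * (x ^ (B + 2)) := by
      have hxB : (0:ℝ) ≤ x ^ B := Real.rpow_nonneg hx0.le B
      have h1 : x ^ B * Real.log (p : ℝ) * (6 * x) ≤ x ^ B * x * (6 * x) :=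
        mul_le_mul_of_nonneg_right (mul_le_mul_of_nonneg_left hlogpx hxB) (by positivity)
      have h2 : x ^ B * x * (6 * x) = 6 * (x ^ (B + 1) * x) := by
        rw [Real.rpow_add_one hx0.ne' B]; ring
      have h3 : x ^ (B + 1) * x = x ^ (B + 2) := by
        have h4 := Real.rpow_add_one hx0.ne' (B + 1)
        rw [show (B + 1 + 1 : ℝ) = B + 2 by ring] at h4
        exact h4.symm
      rw [h2, h3] at h1
      exact h1
    have hfinal : Real.exp (-(1 + δ) * x) * (6 * (x ^ (B + 2)))
        ≤ C * (((N : ℕ) : ℝ) ^ (-(1 + δ/2))) := by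
      have h4 : x ^ (B + 2) ≤ K * Real.exp (δ/2 * x) := hKle x hxge
      have h5 : ((N : ℕ) : ℝ) ^ (-(1 + δ/2)) = Real.exp (-(1 + δ) * x) * Real.exp (δ/2 * x) := by
        rw [← Real.exp_add, Real.rpow_def_of_pos (by positivity), ← hxlog]
        congr 1
        ring
      rw [h5, hC]
      have hexp : (0:ℝ) < Real.exp (-(1 + δ) * x) := Real.exp_pos _
      nlinarith [h4, hexp, Real.exp_pos (δ/2 * x)]
    calc Aa δ B a * (6 * x)
        = Real.exp (-(1 + δ) * x) * (x ^ B * Real.log (p : ℝ) * (6 * x)) := by rw [hAa]; ring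
      _ ≤ Real.exp (-(1 + δ) * x) * (6 * (x ^ (B + 2))) := by
          exact mul_le_mul_of_nonneg_left hxB2 (Real.exp_pos _).le
      _ ≤ C * (((N : ℕ) : ℝ) ^ (-(1 + δ/2))) := hfinal


/-- Fix `δ > 0` and `B : ℝ`.  For every prime `p` and positive integer `m`, the sum over
primes `q` and positive integers `n` with `q^n < p^m` of `q^{-n}/(n(m log p - n log q))`
is `O(m log p)` uniformly in `p, m`; consequently the quadruple series
`∑_{p,m} ∑_{q^n < p^m} p^{-m(1+δ)} q^{-n} (m log p)^B (log p) / (n (m log p - n log q))`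
converges. -/
theorem inner_sum_bound_and_quadruple_summable (δ B : ℝ) (hδ : 0 < δ) :
    (∃ C : ℝ, ∀ (p : Nat.Primes) (m : ℕ),
      (∑' y : {y : Nat.Primes × ℕ // ((y.1 : ℕ)) ^ (y.2 + 1) < ((p : ℕ)) ^ (m + 1)},
        ((y : Nat.Primes × ℕ).1 : ℝ) ^ (-((y : Nat.Primes × ℕ).2 + 1 : ℤ)) /
          (((y : Nat.Primes × ℕ).2 + 1 : ℝ) *
            ((m + 1 : ℝ) * Real.log (p : ℝ) -
              ((y : Nat.Primes × ℕ).2 + 1 : ℝ) * Real.log ((y : Nat.Primes × ℕ).1 : ℝ))))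
        ≤ C * ((m + 1 : ℝ) * Real.log (p : ℝ))) ∧
    Summable (fun x : {x : (Nat.Primes × ℕ) × (Nat.Primes × ℕ) //
        ((x.2.1 : ℕ)) ^ (x.2.2 + 1) < ((x.1.1 : ℕ)) ^ (x.1.2 + 1)} =>
      ((x : (Nat.Primes × ℕ) × (Nat.Primes × ℕ)).1.1 : ℝ) ^
            (-(((x : (Nat.Primes × ℕ) × (Nat.Primes × ℕ)).1.2 + 1 : ℝ) * (1 + δ))) *
        ((x : (Nat.Primes × ℕ) × (Nat.Primes × ℕ)).2.1 : ℝ) ^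
            (-((x : (Nat.Primes × ℕ) × (Nat.Primes × ℕ)).2.2 + 1 : ℤ)) *
        (((x : (Nat.Primes × ℕ) × (Nat.Primes × ℕ)).1.2 + 1 : ℝ) *
            Real.log ((x : (Nat.Primes × ℕ) × (Nat.Primes × ℕ)).1.1 : ℝ)) ^ B *
        Real.log ((x : (Nat.Primes × ℕ) × (Nat.Primes × ℕ)).1.1 : ℝ) /
        (((x : (Nat.Primes × ℕ) × (Nat.Primes × ℕ)).2.2 + 1 : ℝ) *
          (((x : (Nat.Primes × ℕ) × (Nat.Primes × ℕ)).1.2 + 1 : ℝ) *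
              Real.log ((x : (Nat.Primes × ℕ) × (Nat.Primes × ℕ)).1.1 : ℝ) -
            ((x : (Nat.Primes × ℕ) × (Nat.Primes × ℕ)).2.2 + 1 : ℝ) *
              Real.log ((x : (Nat.Primes × ℕ) × (Nat.Primes × ℕ)).2.1 : ℝ)))) := by
  constructor
  · exact ⟨6, fun p m => part1 p m⟩
  · exact main δ B hδ
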